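/- Every normal quotient of a connected vertex- and edge-transitive strongly regular graph is itself a connected vertex- and edge-transitive strongly regular graph. -/

import Mathlib

open MulAction Finset

/-- The normal quotient graph: vertices are the `N`-orbits, two distinct orbits
being adjacent when some vertex of one is adjacent in `Γ` to some vertex of the other. -/
def quotientGraph {V G : Type*} (Γ : SimpleGraph V) [Group G] [MulAction G V]
    (N : Subgroup G) : SimpleGraph (Quotient (orbitRel N V)) where
  Adj X Y := X ≠ Y ∧ ∃ x y : V, Quotient.mk (orbitRel N V) x = X ∧
    Quotient.mk (orbitRel N V) y = Y ∧ Γ.Adj x y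
  symm := by
    constructor
    rintro X Y ⟨hne, x, y, hx, hy, hxy⟩
    exact ⟨hne.symm, y, x, hy, hx, hxy.symm⟩
  loopless := by constructor; rintro X ⟨h, -⟩; exact h rfl



noncomputable section
open scoped Classical

variable {V G : Type*} [Group G] [MulAction G V] {N : Subgroup G}

local notation "mkq" => Quotient.mk (orbitRel N V)

lemma mk_eq_iff (x y : V) : (Quotient.mk (orbitRel N V) x) = Quotient.mk (orbitRel N V) y ↔ ∃ n : N, n • y = x := by
  rw [Quotient.eq]
  exact orbitRel_apply.trans (mem_orbit_iff)

lemma mk_smul (hN : N.Normal) (g : G) {x y : V}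
    (h : (mkq x) = mkq y) : (mkq (g • x)) = mkq (g • y) := by
  rw [mk_eq_iff] at h ⊢
  obtain ⟨n, hn⟩ := h
  refine ⟨⟨g * n * g⁻¹, hN.conj_mem n n.2 g⟩, ?_⟩
  have : (n : G) • y = x := hn
  simp [Subgroup.smul_def, mul_smul, this]

lemma mk_smul_self (n : N) (x : V) : (mkq ((n : G) • x)) = mkq x :=
  (mk_eq_iff _ _).2 ⟨n, rfl⟩

variable [Fintype V]

/-- the block (orbit) of `B` as a finset -/
def blk (N : Subgroup G) (B : Quotient (orbitRel N V)) : Finset V :=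
  Finset.univ.filter (fun w => Quotient.mk (orbitRel N V) w = B)

variable (Γ : SimpleGraph V) [DecidableRel Γ.Adj]

/-- number of neighbours of `v` in block `B` -/
def ecnt (N : Subgroup G) (v : V) (B : Quotient (orbitRel N V)) : ℕ :=
  ((blk N B).filter (fun w => Γ.Adj v w)).card

lemma mem_blk {w : V} {B : Quotient (orbitRel N V)} : w ∈ blk N B ↔ (mkq w) = B := by
  simp [blk]

lemma blk_nonempty (B : Quotient (orbitRel N V)) : (blk N B).Nonempty :=
  ⟨B.out, mem_blk.2 (Quotient.out_eq B)⟩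

lemma blk_smul (hN : N.Normal) (g : G) (y : V) :
    blk N (mkq (g • y)) = (blk N (mkq y)).image (fun w => g • w) := by
  ext w
  simp only [mem_blk, Finset.mem_image]
  constructor
  · intro h
    refine ⟨g⁻¹ • w, ?_, by simp⟩
    have := mk_smul hN g⁻¹ h
    simpa using this
  · rintro ⟨a, ha, rfl⟩
    exact mk_smul hN g ha

lemma blk_card_smul (hN : N.Normal) (g : G) (y : V) :
    (blk N (mkq (g • y))).card = (blk N (mkq y)).card := by
  rw [blk_smul hN g y, Finset.card_image_of_injective _ (MulAction.injective g)]

lemma blk_card_const (hN : N.Normal) (hvtrans : MulAction.IsPretransitive G V)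
    (B C : Quotient (orbitRel N V)) : (blk N B).card = (blk N C).card := by
  obtain ⟨g, hg⟩ := hvtrans.exists_smul_eq B.out C.out
  have : (blk N (mkq (g • B.out))).card = (blk N (mkq B.out)).card := blk_card_smul hN g B.out
  rw [hg] at this
  rw [Quotient.out_eq, Quotient.out_eq] at this
  exact this.symm

lemma ecnt_smul (hN : N.Normal) (hact : ∀ (g : G) (u v : V), Γ.Adj (g • u) (g • v) ↔ Γ.Adj u v)
    (g : G) (v y : V) : ecnt Γ N (g • v) (mkq (g • y)) = ecnt Γ N v (mkq y) := by
  unfold ecnt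
  rw [blk_smul hN g y, Finset.filter_image, Finset.card_image_of_injective _ (MulAction.injective g)]
  congr 1
  apply Finset.filter_congr
  intro w _
  simp [hact g v w]

lemma ecnt_block_const (hN : N.Normal) (hact : ∀ (g : G) (u v : V), Γ.Adj (g • u) (g • v) ↔ Γ.Adj u v)
    {v v' : V} (h : (mkq v') = mkq v) (B : Quotient (orbitRel N V)) :
    ecnt Γ N v' B = ecnt Γ N v B := by
  rw [mk_eq_iff] at h
  obtain ⟨n, rfl⟩ := h
  obtain ⟨y, hy⟩ : ∃ y : V, B = mkq y := ⟨B.out, (Quotient.out_eq B).symm⟩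
  subst hy
  have h1 : ecnt Γ N ((n : G) • v) (mkq ((n : G) • y)) = ecnt Γ N v (mkq y) :=
    ecnt_smul Γ hN hact (n : G) v y
  rwa [mk_smul_self n y] at h1

lemma ecnt_eq_sum (v : V) (B : Quotient (orbitRel N V)) :
    ecnt Γ N v B = ∑ w ∈ blk N B, if Γ.Adj v w then 1 else 0 :=
  Finset.card_filter _ _

lemma sum_ecnt_symm (B C : Quotient (orbitRel N V)) :
    ∑ b ∈ blk N B, ecnt Γ N b C = ∑ c ∈ blk N C, ecnt Γ N c B := by
  simp_rw [ecnt_eq_sum]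
  rw [Finset.sum_comm]
  refine Finset.sum_congr rfl fun c _ => Finset.sum_congr rfl fun b _ => ?_
  exact if_congr (Γ.adj_comm b c) rfl rfl

lemma sum_ecnt_blk (hN : N.Normal) (hact : ∀ (g : G) (u v : V), Γ.Adj (g • u) (g • v) ↔ Γ.Adj u v)
    (v : V) (C : Quotient (orbitRel N V)) :
    ∑ b ∈ blk N (mkq v), ecnt Γ N b C = (blk N (mkq v)).card * ecnt Γ N v C := by
  rw [Finset.sum_congr rfl (fun b hb => ecnt_block_const Γ hN hact (mem_blk.1 hb) C)]
  rw [Finset.sum_const, smul_eq_mul]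

lemma ecnt_adj_symm (hN : N.Normal) (hvtrans : MulAction.IsPretransitive G V)
    (hact : ∀ (g : G) (u v : V), Γ.Adj (g • u) (g • v) ↔ Γ.Adj u v)
    (v w : V) : ecnt Γ N v (mkq w) = ecnt Γ N w (mkq v) := by
  have h1 := sum_ecnt_blk Γ hN hact v (mkq w)
  have h2 := sum_ecnt_blk Γ hN hact w (mkq v)
  have h3 := sum_ecnt_symm Γ (mkq v) (mkq w)
  rw [h1, h2] at h3
  rw [blk_card_const hN hvtrans (mkq v) (mkq w)] at h3
  have hpos : 0 < (blk N (mkq w)).card := Finset.card_pos.2 (blk_nonempty _)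
  exact Nat.eq_of_mul_eq_mul_left hpos h3

lemma ecnt_edge_const (hN : N.Normal) (hvtrans : MulAction.IsPretransitive G V)
    (hact : ∀ (g : G) (u v : V), Γ.Adj (g • u) (g • v) ↔ Γ.Adj u v)
    (hedge : ∀ u v x y : V, Γ.Adj u v → Γ.Adj x y →
      ∃ g : G, (g • u = x ∧ g • v = y) ∨ (g • u = y ∧ g • v = x))
    {v w v' w' : V} (h : Γ.Adj v w) (h' : Γ.Adj v' w') :
    ecnt Γ N v (mkq w) = ecnt Γ N v' (mkq w') := by
  obtain ⟨g, hg | hg⟩ := hedge v w v' w' h h'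
  · rw [← hg.1, ← hg.2, ecnt_smul Γ hN hact]
  · rw [← hg.1, ← hg.2, ecnt_smul Γ hN hact, ecnt_adj_symm Γ hN hvtrans hact]

lemma blocks_indep (hN : N.Normal) (hconn : Γ.Connected)
    (hedge : ∀ u v x y : V, Γ.Adj u v → Γ.Adj x y →
      ∃ g : G, (g • u = x ∧ g • v = y) ∨ (g • u = y ∧ g • v = x))
    (hNintrans : ¬ MulAction.IsPretransitive N V)
    {u v : V} (huv : Γ.Adj u v) : (mkq u) ≠ mkq v := by
  intro heq
  have hintra : ∀ x y : V, Γ.Adj x y → (mkq x) = mkq y := by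
    intro x y hxy
    obtain ⟨g, hg | hg⟩ := hedge u v x y huv hxy
    · rw [← hg.1, ← hg.2]; exact mk_smul hN g heq
    · rw [← hg.1, ← hg.2]; exact (mk_smul hN g heq.symm)
  have hwalk : ∀ x y : V, Γ.Walk x y → (mkq x) = mkq y := by
    intro x y w
    induction w with
    | nil => rfl
    | cons h _ ih => exact (hintra _ _ h).trans ih
  apply hNintrans
  constructor
  intro x y
  obtain ⟨w⟩ := hconn.preconnected y x
  obtain ⟨n, hn⟩ := (mk_eq_iff y x).1 (hwalk y x w)
  exact ⟨n, hn⟩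

section Main

variable (hN : N.Normal) (hconn : Γ.Connected)
    (hact : ∀ (g : G) (u v : V), Γ.Adj (g • u) (g • v) ↔ Γ.Adj u v)
    (hvtrans : MulAction.IsPretransitive G V)
    (hedge : ∀ u v x y : V, Γ.Adj u v → Γ.Adj x y →
      ∃ g : G, (g • u = x ∧ g • v = y) ∨ (g • u = y ∧ g • v = x))
    (hNintrans : ¬ MulAction.IsPretransitive N V)

variable [Fintype (Quotient (orbitRel N V))] [DecidableRel (quotientGraph Γ N).Adj]

include hN hconn hedge hNintrans in
lemma qadj_iff (hact : ∀ (g : G) (u v : V), Γ.Adj (g • u) (g • v) ↔ Γ.Adj u v)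
    (v : V) (B : Quotient (orbitRel N V)) :
    (quotientGraph Γ N).Adj (mkq v) B ↔ ∃ w, (mkq w) = B ∧ Γ.Adj v w := by
  constructor
  · rintro ⟨hne, x, y, hx, hy, hxy⟩
    obtain ⟨n, hn⟩ := (mk_eq_iff v x).1 hx.symm
    refine ⟨(n : G) • y, (mk_smul_self n y).trans hy, ?_⟩
    rw [← hn]
    exact (hact (n : G) x y).2 hxy
  · rintro ⟨w, hw, hvw⟩
    exact ⟨fun h => blocks_indep Γ hN hconn hedge hNintrans hvw (h.trans hw.symm),
      v, w, rfl, hw, hvw⟩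

include hconn hNintrans in
lemma exists_edge : ∃ v w : V, Γ.Adj v w := by
  have h : ∃ x y : V, ∀ n : N, n • x ≠ y := by
    by_contra h
    push_neg at h
    exact hNintrans ⟨fun x y => h x y⟩
  obtain ⟨x, y, hxy⟩ := h
  have hne : x ≠ y := fun h => hxy 1 (by simp [h])
  obtain ⟨w⟩ := hconn.preconnected x y
  cases w with
  | nil => exact absurd rfl hne
  | cons h _ => exact ⟨_, _, h⟩

include hN hconn hact hvtrans hedge hNintrans in
lemma ecnt_char {v0 w0 : V} (h0 : Γ.Adj v0 w0) (v : V) (B : Quotient (orbitRel N V)) :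
    ecnt Γ N v B = if (quotientGraph Γ N).Adj (mkq v) B then ecnt Γ N v0 (mkq w0) else 0 := by
  by_cases h : (quotientGraph Γ N).Adj (mkq v) B
  · rw [if_pos h]
    obtain ⟨w, hw, hvw⟩ := (qadj_iff Γ hN hconn hedge hNintrans hact v B).1 h
    rw [← hw]
    exact ecnt_edge_const Γ hN hvtrans hact hedge hvw h0
  · rw [if_neg h]
    unfold ecnt
    rw [Finset.card_eq_zero, Finset.filter_eq_empty_iff]
    intro w hwB hvw
    exact h ((qadj_iff Γ hN hconn hedge hNintrans hact v B).2 ⟨w, mem_blk.1 hwB, hvw⟩)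

include hN hconn hact hvtrans hedge hNintrans in
lemma degree_eq {v0 w0 : V} (h0 : Γ.Adj v0 w0) (v : V) :
    Γ.degree v = ecnt Γ N v0 (mkq w0) *
      (Finset.univ.filter (fun D => (quotientGraph Γ N).Adj (mkq v) D)).card := by
  classical
  have h1 : Γ.degree v = ∑ D : Quotient (orbitRel N V), ecnt Γ N v D := by
    rw [← SimpleGraph.card_neighborFinset_eq_degree, SimpleGraph.neighborFinset_eq_filter,
      Finset.card_filter]
    rw [← Finset.sum_fiberwise Finset.univ (fun w => Quotient.mk (orbitRel N V) w)
      (fun w => if Γ.Adj v w then 1 else 0)]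
    exact Finset.sum_congr rfl fun D _ => (ecnt_eq_sum Γ v D).symm
  rw [h1]
  rw [Finset.sum_congr rfl (fun D _ => ecnt_char Γ hN hconn hact hvtrans hedge hNintrans h0 v D)]
  rw [← Finset.sum_filter, Finset.sum_const, smul_eq_mul, mul_comm]

omit hN hconn hedge hNintrans

lemma count_swap (B C : Quotient (orbitRel N V)) :
    (∑ b ∈ blk N B, ∑ c ∈ blk N C,
        (Finset.univ.filter fun w => Γ.Adj b w ∧ Γ.Adj c w).card)
      = ∑ w : V, ecnt Γ N w B * ecnt Γ N w C := by
  have h1 : ∀ b c : V, (Finset.univ.filter fun w => Γ.Adj b w ∧ Γ.Adj c w).card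
      = ∑ w : V, (if Γ.Adj w b then 1 else 0) * (if Γ.Adj w c then 1 else 0) := by
    intro b c
    rw [Finset.card_filter]
    refine Finset.sum_congr rfl fun w _ => ?_
    by_cases h : Γ.Adj b w <;> by_cases h' : Γ.Adj c w <;>
      simp [h, h', Γ.adj_comm]
  simp_rw [h1, ecnt_eq_sum]
  rw [Finset.sum_congr rfl (fun b _ => Finset.sum_comm (s := blk N C) (t := Finset.univ)
    (f := fun c w => (if Γ.Adj w b then 1 else 0) * if Γ.Adj w c then 1 else 0))]
  rw [Finset.sum_comm]
  refine Finset.sum_congr rfl fun w _ => ?_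
  exact (Finset.sum_mul_sum _ _ _ _).symm

include hN hconn hact hvtrans hedge hNintrans in
lemma count_rhs {v0 w0 : V} (h0 : Γ.Adj v0 w0) (B C : Quotient (orbitRel N V)) :
    ∑ w : V, ecnt Γ N w B * ecnt Γ N w C
      = (blk N B).card * (ecnt Γ N v0 (mkq w0) * ecnt Γ N v0 (mkq w0) *
        (Finset.univ.filter fun D => (quotientGraph Γ N).Adj D B ∧
          (quotientGraph Γ N).Adj D C).card) := by
  classical
  rw [← Finset.sum_fiberwise Finset.univ (fun w => Quotient.mk (orbitRel N V) w)
    (fun w => ecnt Γ N w B * ecnt Γ N w C)]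
  have key : ∀ D : Quotient (orbitRel N V),
      (∑ w ∈ Finset.univ.filter (fun w => (mkq w) = D), ecnt Γ N w B * ecnt Γ N w C)
      = (blk N B).card * (if (quotientGraph Γ N).Adj D B ∧ (quotientGraph Γ N).Adj D C
          then ecnt Γ N v0 (mkq w0) * ecnt Γ N v0 (mkq w0) else 0) := by
    intro D
    have hc : ∀ w ∈ Finset.univ.filter (fun w => (mkq w) = D),
        ecnt Γ N w B * ecnt Γ N w C
        = (if (quotientGraph Γ N).Adj D B ∧ (quotientGraph Γ N).Adj D C
            then ecnt Γ N v0 (mkq w0) * ecnt Γ N v0 (mkq w0) else 0) := by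
      intro w hw
      have hwD : (mkq w) = D := (Finset.mem_filter.1 hw).2
      rw [ecnt_char Γ hN hconn hact hvtrans hedge hNintrans h0 w B,
        ecnt_char Γ hN hconn hact hvtrans hedge hNintrans h0 w C, hwD]
      by_cases h1 : (quotientGraph Γ N).Adj D B <;>
        by_cases h2 : (quotientGraph Γ N).Adj D C <;> simp [h1, h2]
    rw [Finset.sum_congr rfl hc, Finset.sum_const, smul_eq_mul]
    congr 1
    exact blk_card_const hN hvtrans D B
  rw [Finset.sum_congr rfl (fun D _ => key D), ← Finset.mul_sum]
  congr 1
  rw [← Finset.sum_filter, Finset.sum_const, smul_eq_mul, mul_comm]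

lemma card_common_eq {α : Type*} [Fintype α] (Gr : SimpleGraph α) [DecidableRel Gr.Adj] (v w : α)
    [Fintype (Gr.commonNeighbors v w)] :
    Fintype.card (Gr.commonNeighbors v w)
      = (Finset.univ.filter fun u => Gr.Adj v u ∧ Gr.Adj w u).card := by
  classical
  rw [← Set.toFinset_card]
  congr 1
  ext u
  simp [SimpleGraph.mem_commonNeighbors]

include hN hconn hact hvtrans hedge hNintrans in
lemma count_lhs {n k l μ : ℕ} (hsrg : Γ.IsSRGWith n k l μ) {v0 w0 : V} (h0 : Γ.Adj v0 w0)
    {B C : Quotient (orbitRel N V)} (hBC : B ≠ C) :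
    (∑ b ∈ blk N B, ∑ c ∈ blk N C,
        (Finset.univ.filter fun w => Γ.Adj b w ∧ Γ.Adj c w).card)
      = (blk N B).card * (l * (if (quotientGraph Γ N).Adj B C then ecnt Γ N v0 (mkq w0) else 0)
          + μ * ((blk N C).card -
            (if (quotientGraph Γ N).Adj B C then ecnt Γ N v0 (mkq w0) else 0))) := by
  classical
  have inner : ∀ b ∈ blk N B, (∑ c ∈ blk N C,
      (Finset.univ.filter fun w => Γ.Adj b w ∧ Γ.Adj c w).card)
      = l * (if (quotientGraph Γ N).Adj B C then ecnt Γ N v0 (mkq w0) else 0)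
          + μ * ((blk N C).card -
            (if (quotientGraph Γ N).Adj B C then ecnt Γ N v0 (mkq w0) else 0)) := by
    intro b hb
    have hbB : (mkq b) = B := mem_blk.1 hb
    have step1 : ∀ c ∈ blk N C, (Finset.univ.filter fun w => Γ.Adj b w ∧ Γ.Adj c w).card
        = if Γ.Adj b c then l else μ := by
      intro c hc
      have hcC : (mkq c) = C := mem_blk.1 hc
      have hne : b ≠ c := fun h => hBC (hbB ▸ hcC ▸ h ▸ rfl)
      rw [← card_common_eq Γ b c]
      by_cases hadj : Γ.Adj b c
      · rw [if_pos hadj]; exact hsrg.of_adj b c hadj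
      · rw [if_neg hadj]; exact hsrg.of_not_adj hne hadj
    rw [Finset.sum_congr rfl step1, Finset.sum_ite, Finset.sum_const, Finset.sum_const,
      smul_eq_mul, smul_eq_mul]
    have hecnt : (Finset.filter (fun c => Γ.Adj b c) (blk N C)).card = ecnt Γ N b C := rfl
    have hsplit := Finset.card_filter_add_card_filter_not
      (s := blk N C) (p := fun c => Γ.Adj b c)
    have hecnt2 : ecnt Γ N b C
        = if (quotientGraph Γ N).Adj B C then ecnt Γ N v0 (mkq w0) else 0 := by
      rw [← hbB]
      exact ecnt_char Γ hN hconn hact hvtrans hedge hNintrans h0 b C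
    rw [hecnt, hecnt2] at hsplit ⊢
    have hneg : (Finset.filter (fun c => ¬ Γ.Adj b c) (blk N C)).card
        = (blk N C).card - (if (quotientGraph Γ N).Adj B C then ecnt Γ N v0 (mkq w0) else 0) := by
      omega
    rw [hneg, Nat.mul_comm (if (quotientGraph Γ N).Adj B C then ecnt Γ N v0 (mkq w0) else 0) l,
      Nat.mul_comm ((blk N C).card
        - (if (quotientGraph Γ N).Adj B C then ecnt Γ N v0 (mkq w0) else 0)) μ]
  rw [Finset.sum_congr rfl inner, Finset.sum_const, smul_eq_mul]

include hN hconn hact hvtrans hedge hNintrans in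
lemma master {n k l μ : ℕ} (hsrg : Γ.IsSRGWith n k l μ) {v0 w0 : V} (h0 : Γ.Adj v0 w0)
    {B C : Quotient (orbitRel N V)} (hBC : B ≠ C) :
    l * (if (quotientGraph Γ N).Adj B C then ecnt Γ N v0 (mkq w0) else 0)
      + μ * ((blk N C).card -
          (if (quotientGraph Γ N).Adj B C then ecnt Γ N v0 (mkq w0) else 0))
      = ecnt Γ N v0 (mkq w0) * ecnt Γ N v0 (mkq w0) *
        (Finset.univ.filter fun D => (quotientGraph Γ N).Adj D B ∧
          (quotientGraph Γ N).Adj D C).card := by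
  have h1 := count_lhs Γ hN hconn hact hvtrans hedge hNintrans hsrg h0 hBC
  have h2 := count_swap Γ B C
  have h3 := count_rhs Γ hN hconn hact hvtrans hedge hNintrans h0 B C
  have hpos : 0 < (blk N B).card := Finset.card_pos.2 (blk_nonempty _)
  exact Nat.eq_of_mul_eq_mul_left hpos (h1 ▸ h2 ▸ h3)

end Main
end

/-- Every normal quotient of a connected vertex- and edge-transitive strongly regular
graph is itself a connected vertex- and edge-transitive strongly regular graph. -/
theorem stmt8 {V G : Type*} [Fintype V] [Group G] [MulAction G V]
    (Γ : SimpleGraph V) [DecidableRel Γ.Adj] (n k l μ : ℕ)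
    (hsrg : Γ.IsSRGWith n k l μ) (hconn : Γ.Connected)
    (hact : ∀ (g : G) (u v : V), Γ.Adj (g • u) (g • v) ↔ Γ.Adj u v)
    (hvtrans : MulAction.IsPretransitive G V)
    (hedge : ∀ u v x y : V, Γ.Adj u v → Γ.Adj x y →
      ∃ g : G, (g • u = x ∧ g • v = y) ∨ (g • u = y ∧ g • v = x))
    (N : Subgroup G) (hN : N.Normal) (hNbot : N ≠ ⊥)
    (hNintrans : ¬ MulAction.IsPretransitive N V)
    [Fintype (Quotient (orbitRel N V))]
    [DecidableRel (quotientGraph Γ N).Adj] :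
    (quotientGraph Γ N).Connected ∧
    -- vertex-transitivity of the induced `G`-action on the quotient
    (∀ X Y : Quotient (orbitRel N V), ∃ g : G, ∀ x : V,
      Quotient.mk (orbitRel N V) x = X → Quotient.mk (orbitRel N V) (g • x) = Y) ∧
    -- edge-transitivity of the induced `G`-action on the quotient
    (∀ X Y X' Y' : Quotient (orbitRel N V),
      (quotientGraph Γ N).Adj X Y → (quotientGraph Γ N).Adj X' Y' →
      ∃ g : G, ∀ x y : V, Quotient.mk (orbitRel N V) x = X →
        Quotient.mk (orbitRel N V) y = Y →
        ((Quotient.mk (orbitRel N V) (g • x) = X' ∧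
          Quotient.mk (orbitRel N V) (g • y) = Y') ∨
         (Quotient.mk (orbitRel N V) (g • x) = Y' ∧
          Quotient.mk (orbitRel N V) (g • y) = X'))) ∧
    -- strong regularity of the quotient
    (∃ k' l' μ' : ℕ, (quotientGraph Γ N).IsSRGWith
      (Fintype.card (Quotient (orbitRel N V))) k' l' μ') := by
  classical
  -- connectivity
  have hreach : ∀ x y : V, (quotientGraph Γ N).Reachable (Quotient.mk (orbitRel N V) x)
      (Quotient.mk (orbitRel N V) y) := by
    intro x y
    obtain ⟨w⟩ := hconn.preconnected x y
    induction w with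
    | nil => exact SimpleGraph.Reachable.refl _
    | @cons a b c h p ih =>
      refine SimpleGraph.Reachable.trans ?_ ih
      by_cases he : Quotient.mk (orbitRel N V) a = Quotient.mk (orbitRel N V) b
      · rw [he]
      · exact SimpleGraph.Adj.reachable ⟨he, a, b, rfl, rfl, h⟩
  have hconnQ : (quotientGraph Γ N).Connected := by
    have hne : Nonempty V := hconn.nonempty
    haveI : Nonempty (Quotient (orbitRel N V)) :=
      ⟨Quotient.mk (orbitRel N V) (Classical.arbitrary V)⟩
    exact ⟨fun X Y => Quotient.inductionOn₂ X Y (fun x y => hreach x y)⟩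
  -- vertex transitivity
  have hvt : ∀ X Y : Quotient (orbitRel N V), ∃ g : G, ∀ x : V,
      Quotient.mk (orbitRel N V) x = X → Quotient.mk (orbitRel N V) (g • x) = Y := by
    intro X Y
    obtain ⟨g, hg⟩ := hvtrans.exists_smul_eq X.out Y.out
    refine ⟨g, fun x hx => ?_⟩
    have h1 : Quotient.mk (orbitRel N V) x = Quotient.mk (orbitRel N V) X.out := by
      rw [hx, Quotient.out_eq]
    have h2 := mk_smul hN g h1
    rw [hg] at h2
    rw [h2, Quotient.out_eq]
  -- edge transitivity
  have het : ∀ X Y X' Y' : Quotient (orbitRel N V),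
      (quotientGraph Γ N).Adj X Y → (quotientGraph Γ N).Adj X' Y' →
      ∃ g : G, ∀ x y : V, Quotient.mk (orbitRel N V) x = X →
        Quotient.mk (orbitRel N V) y = Y →
        ((Quotient.mk (orbitRel N V) (g • x) = X' ∧
          Quotient.mk (orbitRel N V) (g • y) = Y') ∨
         (Quotient.mk (orbitRel N V) (g • x) = Y' ∧
          Quotient.mk (orbitRel N V) (g • y) = X')) := by
    rintro X Y X' Y' ⟨-, x, y, hx, hy, hxy⟩ ⟨-, x', y', hx', hy', hxy'⟩
    obtain ⟨g, hg⟩ := hedge x y x' y' hxy hxy'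
    refine ⟨g, fun a b ha hb => ?_⟩
    have h1 : Quotient.mk (orbitRel N V) (g • a) = Quotient.mk (orbitRel N V) (g • x) :=
      mk_smul hN g (by rw [ha, ← hx])
    have h2 : Quotient.mk (orbitRel N V) (g • b) = Quotient.mk (orbitRel N V) (g • y) :=
      mk_smul hN g (by rw [hb, ← hy])
    rcases hg with ⟨h3, h4⟩ | ⟨h3, h4⟩
    · left
      exact ⟨by rw [h1, h3, hx'], by rw [h2, h4, hy']⟩
    · right
      exact ⟨by rw [h1, h3, hy'], by rw [h2, h4, hx']⟩
  -- strong regularity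
  obtain ⟨v0, w0, h0⟩ := exists_edge Γ hconn hNintrans
  set c := ecnt Γ N v0 (Quotient.mk (orbitRel N V) w0) with hcdef
  set m := (blk N (Quotient.mk (orbitRel N V) w0)).card with hmdef
  have hcpos : 0 < c := by
    rw [hcdef]
    unfold ecnt
    refine Finset.card_pos.2 ⟨w0, ?_⟩
    rw [Finset.mem_filter]
    exact ⟨mem_blk.2 rfl, h0⟩
  have hccpos : 0 < c * c := Nat.mul_pos hcpos hcpos
  refine ⟨hconnQ, hvt, het, k / c, (l * c + μ * (m - c)) / (c * c), (μ * m) / (c * c),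
    ?_, ?_, ?_, ?_⟩
  · rfl
  · -- regularity
    intro X
    have hd := degree_eq Γ hN hconn hact hvtrans hedge hNintrans h0 X.out
    rw [hsrg.regular X.out] at hd
    have hdeg : (quotientGraph Γ N).degree X = (Finset.univ.filter
        (fun D => (quotientGraph Γ N).Adj (Quotient.mk (orbitRel N V) X.out) D)).card := by
      rw [Quotient.out_eq, ← SimpleGraph.card_neighborFinset_eq_degree,
        SimpleGraph.neighborFinset_eq_filter]
    rw [hdeg]
    exact (Nat.div_eq_of_eq_mul_left hcpos (hd.trans (Nat.mul_comm _ _))).symm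
  · -- adjacent pairs
    intro X Y hXY
    have hmas := master Γ hN hconn hact hvtrans hedge hNintrans hsrg h0 hXY.ne
    rw [if_pos hXY] at hmas
    have hYm : (blk N Y).card = m := blk_card_const hN hvtrans Y (Quotient.mk (orbitRel N V) w0)
    rw [hYm] at hmas
    rw [card_common_eq]
    have hfilt : (Finset.univ.filter fun u => (quotientGraph Γ N).Adj X u ∧
        (quotientGraph Γ N).Adj Y u) = (Finset.univ.filter
        fun D => (quotientGraph Γ N).Adj D X ∧ (quotientGraph Γ N).Adj D Y) :=
      Finset.filter_congr (fun D _ =>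
        and_congr ((quotientGraph Γ N).adj_comm X D) ((quotientGraph Γ N).adj_comm Y D))
    rw [hfilt]
    exact (Nat.div_eq_of_eq_mul_left hccpos (hmas.trans (Nat.mul_comm _ _))).symm
  · -- non-adjacent pairs
    intro X Y hne hXY
    have hmas := master Γ hN hconn hact hvtrans hedge hNintrans hsrg h0 hne
    rw [if_neg hXY] at hmas
    simp only [Nat.mul_zero, Nat.zero_add, Nat.sub_zero] at hmas
    have hYm : (blk N Y).card = m := blk_card_const hN hvtrans Y (Quotient.mk (orbitRel N V) w0)
    rw [hYm] at hmas
    rw [card_common_eq]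
    have hfilt : (Finset.univ.filter fun u => (quotientGraph Γ N).Adj X u ∧
        (quotientGraph Γ N).Adj Y u) = (Finset.univ.filter
        fun D => (quotientGraph Γ N).Adj D X ∧ (quotientGraph Γ N).Adj D Y) :=
      Finset.filter_congr (fun D _ =>
        and_congr ((quotientGraph Γ N).adj_comm X D) ((quotientGraph Γ N).adj_comm Y D))
    rw [hfilt]
    exact (Nat.div_eq_of_eq_mul_left hccpos (hmas.trans (Nat.mul_comm _ _))).symm
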